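/- Let R = ∏_{i ∈ I} R_i be a product of connected commutative unital rings. For every first-order ring formula θ(x₀,…,xₙ) and all f₀,…,fₙ ∈ R, the idempotent ⟦θ(f̄)⟧ defined by ⟦θ(f̄)⟧(i) = 1 if R_i ⊨ θ(f₀(i),…,fₙ(i)) and 0 otherwise, satisfies: for every atom e = χ_i of the Boolean algebra of idempotents, R_e ⊨ θ(f̄_e) iff e ≤ ⟦θ(f̄)⟧; moreover ⟦θ(f̄)⟧ is the unique idempotent with this property. -/
import Mathlib


open FirstOrder

noncomputable local instance (S : Type*) [CommRing S] : FirstOrder.Ring.CompatibleRing S :=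
  FirstOrder.Ring.compatibleRingOfRing S

open Classical in
/-- Let `R = ∏ i, R i` be a product of connected commutative unital rings.  For every
first-order ring formula `θ(x₀,…,xₙ)` and tuple `f̄` from `R`, the idempotent `⟦θ(f̄)⟧` with
`⟦θ(f̄)⟧ i = 1` if `R i ⊨ θ(f̄(i))` and `0` otherwise satisfies: for every atom `e = χ_i` of
the Boolean algebra of idempotents (identifying `R_e ≅ R i`), `R_e ⊨ θ(f̄_e)` iff
`e ≤ ⟦θ(f̄)⟧`; moreover it is the unique idempotent with this property. -/
theorem prod_booleanValue (I : Type*) [DecidableEq I] (R : I → Type*) [∀ i, CommRing (R i)]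
    (hconn : ∀ i, (0 : R i) ≠ 1 ∧ ∀ x : R i, x * x = x → x = 0 ∨ x = 1)
    {n : ℕ} (θ : Language.ring.Formula (Fin n)) (f : Fin n → ∀ i, R i)
    (J : ∀ i, R i)
    (hJ : ∀ i, J i = if θ.Realize (fun k => f k i) then (1 : R i) else 0) :
    IsIdempotentElem J ∧
    (∀ i : I,
      (θ.Realize (fun k => f k i) ↔
        (fun j => if j = i then 1 else 0 : ∀ j, R j) * J =
          (fun j => if j = i then 1 else 0 : ∀ j, R j))) ∧
    (∀ g : ∀ i, R i, IsIdempotentElem g →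
      (∀ i : I,
        (θ.Realize (fun k => f k i) ↔
          (fun j => if j = i then 1 else 0 : ∀ j, R j) * g =
            (fun j => if j = i then 1 else 0 : ∀ j, R j))) →
      g = J) := by
  have key : ∀ (g : ∀ i, R i) (i : I), g i = 1 →
      ((fun j => if j = i then 1 else 0 : ∀ j, R j) * g =
        (fun j => if j = i then 1 else 0 : ∀ j, R j)) := by
    intro g i hg
    funext j
    by_cases hji : j = i
    · subst hji
      simp [hg]
    · simp [hji]
  have key2 : ∀ (g : ∀ i, R i) (i : I),
      ((fun j => if j = i then 1 else 0 : ∀ j, R j) * g =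
        (fun j => if j = i then 1 else 0 : ∀ j, R j)) → g i = 1 := by
    intro g i h
    have := congrFun h i
    simpa using this
  refine ⟨?_, ?_, ?_⟩
  · funext i
    simp only [Pi.mul_apply, hJ i]
    split <;> simp
  · intro i
    constructor
    · intro hθ
      exact key J i (by simp [hJ i, hθ])
    · intro h
      have := key2 J i h
      rw [hJ i] at this
      by_contra hθ
      simp [hθ] at this
      exact (hconn i).1 this
  · intro g hg hprop
    funext i
    have hgi : g i * g i = g i := congrFun hg i
    rcases (hconn i).2 _ hgi with h0 | h1
    · rw [hJ i, h0]
      split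
      · rename_i hθ
        exfalso
        have := key2 g i ((hprop i).mp hθ)
        rw [h0] at this
        exact (hconn i).1 this
      · rfl
    · rw [hJ i, h1]
      split
      · rfl
      · rename_i hθ
        exact absurd ((hprop i).mpr (key g i h1)) hθ
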